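/- Unique Path Property: if f : X → Y and g : Y → Z are partial leaf functions and the composite gf contains the edge ⟨l, l'⟩ (i.e. (gf)(l) = l'), then there is a unique directed path l l₀ … lₙ l' in the union of f and g (viewed as a directed graph on X + Y + Z) from l to l'. -/

import Mathlib

namespace SignedSets

/-- A signed set: a set together with a sign function (`true` = positive). -/
structure SignedSet where
  carrier : Type
  sign : carrier → Bool

/-- Admissibility for the domain side of a partial leaf function `X → Y`:
the element lies in `X⁺ + Y⁻`. -/
def domOK (X Y : SignedSet) : X.carrier ⊕ Y.carrier → Prop
  | .inl x => X.sign x = true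
  | .inr y => Y.sign y = false

/-- Admissibility for the codomain side of a partial leaf function `X → Y`:
the element lies in `X⁻ + Y⁺`. -/
def codOK (X Y : SignedSet) : X.carrier ⊕ Y.carrier → Prop
  | .inl x => X.sign x = false
  | .inr y => Y.sign y = true

/-- A partial leaf function `X → Y`, presented as a functional relation
from `X⁺ + Y⁻` to `X⁻ + Y⁺`. -/
structure PLF (X Y : SignedSet) where
  rel : X.carrier ⊕ Y.carrier → X.carrier ⊕ Y.carrier → Prop
  functional : ∀ ⦃a b c⦄, rel a b → rel a c → b = c
  dom_ok : ∀ ⦃a b⦄, rel a b → domOK X Y a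
  cod_ok : ∀ ⦃a b⦄, rel a b → codOK X Y b

variable {X Y Z : SignedSet}

/-- One directed edge of the union of `f : X → Y` and `g : Y → Z`, viewed as a
directed graph on `X + Y + Z`. -/
def step (f : PLF X Y) (g : PLF Y Z) :
    (X.carrier ⊕ Y.carrier ⊕ Z.carrier) → (X.carrier ⊕ Y.carrier ⊕ Z.carrier) → Prop :=
  fun a b =>
    (∃ a' b', f.rel a' b' ∧ a = Sum.map id Sum.inl a' ∧ b = Sum.map id Sum.inl b') ∨
    (∃ a' b', g.rel a' b' ∧ a = Sum.inr a' ∧ b = Sum.inr b')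

/-- Path composition: `(g f)(l) = l'` iff there is a finite directed path from `l` to
`l'` in the union of `f` and `g`. -/
def pcomp (f : PLF X Y) (g : PLF Y Z) :
    X.carrier ⊕ Z.carrier → X.carrier ⊕ Z.carrier → Prop :=
  fun a b => Relation.TransGen (step f g) (Sum.map id Sum.inr a) (Sum.map id Sum.inr b)

end SignedSets

namespace SignedSets

variable {X Y Z : SignedSet} {f : PLF X Y} {g : PLF Y Z}

lemma step_functional : ∀ ⦃a b c⦄, step f g a b → step f g a c → b = c := by
  rintro a b c (⟨a1, b1, h1, rfl, rfl⟩ | ⟨a1, b1, h1, rfl, rfl⟩)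
    (⟨a2, b2, h2, ha, rfl⟩ | ⟨a2, b2, h2, ha, rfl⟩)
  · obtain rfl : a1 = a2 := by
      cases a1 <;> cases a2 <;> simp_all [Sum.map]
    rw [f.functional h1 h2]
  · exfalso
    have d1 := f.dom_ok h1
    have d2 := g.dom_ok h2
    cases a1 <;> cases a2 <;> simp_all [Sum.map, domOK]
  · exfalso
    have d1 := g.dom_ok h1
    have d2 := f.dom_ok h2
    cases a1 <;> cases a2 <;> simp_all [Sum.map, domOK]
  · obtain rfl : a1 = a2 := by simp_all
    rw [g.functional h1 h2]

lemma no_exit {l' : X.carrier ⊕ Z.carrier} {c d : X.carrier ⊕ Y.carrier ⊕ Z.carrier}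
    (h1 : step f g c (Sum.map id Sum.inr l'))
    (h2 : step f g (Sum.map id Sum.inr l') d) : False := by
  rcases h1 with ⟨a1, b1, h1, _, hb1⟩ | ⟨a1, b1, h1, _, hb1⟩ <;>
    rcases h2 with ⟨a2, b2, h2, ha2, _⟩ | ⟨a2, b2, h2, ha2, _⟩
  · have c1 := f.cod_ok h1
    have d2 := f.dom_ok h2
    cases l' <;> cases b1 <;> cases a2 <;> simp_all [Sum.map, domOK, codOK]
  · have c1 := f.cod_ok h1
    have d2 := g.dom_ok h2
    cases l' <;> cases b1 <;> cases a2 <;> simp_all [Sum.map, domOK, codOK]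
  · have c1 := g.cod_ok h1
    have d2 := f.dom_ok h2
    cases l' <;> cases b1 <;> cases a2 <;> simp_all [Sum.map, domOK, codOK]
  · have c1 := g.cod_ok h1
    have d2 := g.dom_ok h2
    cases l' <;> cases b1 <;> cases a2 <;> simp_all [Sum.map, domOK, codOK]

lemma chain_unique {α : Type*} {r : α → α → Prop}
    (hfun : ∀ ⦃a b c⦄, r a b → r a c → b = c) {b : α} (hb : ∀ d, ¬ r b d) :
    ∀ (ls : List α) {a} (ls' : List α), List.Chain r a (ls ++ [b]) →
      List.Chain r a (ls' ++ [b]) → ls = ls'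
  | [], a, [], _, _ => rfl
  | [], a, c :: t, h1, h2 => by
    simp only [List.Chain, List.nil_append, List.cons_append, List.isChain_cons_cons] at h1 h2
    obtain rfl := hfun h1.1 h2.1
    exfalso
    rcases t with _ | ⟨e, t⟩ <;> simp [List.isChain_cons_cons] at h2 <;>
      first | exact hb _ h2.2 | exact hb _ h2.2.1
  | c :: t, a, [], h1, h2 => by
    simp only [List.Chain, List.nil_append, List.cons_append, List.isChain_cons_cons] at h1 h2
    obtain rfl := hfun h2.1 h1.1
    exfalso
    rcases t with _ | ⟨e, t⟩ <;> simp [List.isChain_cons_cons] at h1 <;>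
      first | exact hb _ h1.2 | exact hb _ h1.2.1
  | c :: t, a, c' :: t', h1, h2 => by
    simp only [List.Chain, List.cons_append, List.isChain_cons_cons] at h1 h2
    obtain rfl := hfun h1.1 h2.1
    rw [chain_unique hfun hb t t' h1.2 h2.2]

lemma exists_chain {α : Type*} {r : α → α → Prop} {a b : α} (h : Relation.TransGen r a b) :
    ∃ ls : List α, List.Chain r a (ls ++ [b]) := by
  induction h using Relation.TransGen.head_induction_on with
  | single h => exact ⟨[], List.Chain.cons h List.Chain.nil⟩
  | head h _ ih =>
    obtain ⟨ls, hc⟩ := ih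
    exact ⟨_ :: ls, List.Chain.cons h hc⟩

/-- **Unique Path Property.** If the path composite `g f` contains the
edge `⟨l, l'⟩`, then there is a unique directed path `l l₀ … lₙ l'` in the union of
`f` and `g` from `l` to `l'` (uniqueness of the list of intermediate vertices). -/
theorem statement2 :
    ∀ (X Y Z : SignedSet) (f : PLF X Y) (g : PLF Y Z)
      (l l' : X.carrier ⊕ Z.carrier), pcomp f g l l' →
      ∃! ls : List (X.carrier ⊕ Y.carrier ⊕ Z.carrier),
        List.Chain (step f g) (Sum.map id Sum.inr l) (ls ++ [Sum.map id Sum.inr l']) := by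
  intro X Y Z f g l l' h
  obtain ⟨ls, hc⟩ := exists_chain h
  have hb : ∀ d, ¬ step f g (Sum.map id Sum.inr l') d := by
    intro d hd
    cases h with
    | single h => exact no_exit h hd
    | tail _ h => exact no_exit h hd
  exact ⟨ls, hc, fun ls' hc' => chain_unique step_functional hb ls' ls hc' hc⟩

end SignedSets
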